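/- Let a, b > 0, set Δ = 2^{−b/a} and c = (log 2)/a, and for i, j, k ∈ ℤ let Q(i,j,k) = [2^i·j, 2^i·(j+1)] × [Δ^i·k, Δ^i·(k+1)] × [i·c, (i+1)·c] ⊆ ℝ³. Let g = (α,β,γ) ∈ ℝ³ and let L_g : ℝ³ → ℝ³ be the left translation L_g(x,y,z) = (α + e^{aγ}·x, β + e^{−bγ}·y, γ + z). Then L_g maps every tile onto a tile (i.e., for every (i,j,k) ∈ ℤ³ there exists (i',j',k') ∈ ℤ³ with L_g(Q(i,j,k)) = Q(i',j',k')) if and only if α = 0, β = 0 and γ = m·c for some m ∈ ℤ. That is, the group of left translations of Sol(a,b) preserving the tiling is exactly the infinite cyclic subgroup generated by R̂. -/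

import Mathlib

open Set

lemma aux_image_prod3 (f g h : ℝ → ℝ) (A B C : Set ℝ) :
    (fun p : ℝ × ℝ × ℝ => (f p.1, g p.2.1, h p.2.2)) '' (A ×ˢ B ×ˢ C) =
      (f '' A) ×ˢ (g '' B) ×ˢ (h '' C) := by
  ext ⟨x, y, z⟩
  constructor
  · rintro ⟨⟨u, v, w⟩, ⟨hu, hv, hw⟩, heq⟩
    simp only [Prod.mk.injEq] at heq
    obtain ⟨h1, h2, h3⟩ := heq
    exact ⟨⟨u, hu, h1⟩, ⟨v, hv, h2⟩, ⟨w, hw, h3⟩⟩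
  · rintro ⟨⟨u, hu, hx⟩, ⟨v, hv, hy⟩, ⟨w, hw, hz⟩⟩
    exact ⟨(u, v, w), ⟨hu, hv, hw⟩, by simp [hx, hy, hz]⟩

lemma aux_prod3_eq {A B C A' B' C' : Set ℝ} (hA : A.Nonempty) (hB : B.Nonempty)
    (hC : C.Nonempty) (h : A ×ˢ B ×ˢ C = A' ×ˢ B' ×ˢ C') :
    A = A' ∧ B = B' ∧ C = C' := by
  have h1 := (Set.prod_eq_prod_iff_of_nonempty (hA.prod (hB.prod hC))).1 h
  obtain ⟨hA', hBC⟩ := h1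
  have h2 := (Set.prod_eq_prod_iff_of_nonempty (hB.prod hC)).1 hBC
  exact ⟨hA', h2.1, h2.2⟩

lemma aux_Icc_endpoints {p q r s : ℝ} (h : p < q) (heq : Icc p q = Icc r s) :
    p = r ∧ q = s := by
  have h1 : (Icc r s).Nonempty := heq ▸ nonempty_Icc.2 h.le
  have hrs : r ≤ s := nonempty_Icc.1 h1
  constructor
  · have := congrArg sInf heq
    rwa [csInf_Icc h.le, csInf_Icc hrs] at this
  · have := congrArg sSup heq
    rwa [csSup_Icc h.le, csSup_Icc hrs] at this

lemma aux_int_mul_eq_zero {t x : ℝ} (ht : 0 < t) (hx : |x| < t) {k : ℤ}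
    (h : x = t * k) : x = 0 := by
  rcases eq_or_ne k 0 with h0 | h0
  · simp [h, h0]
  · exfalso
    have h1 : (1 : ℝ) ≤ |(k : ℝ)| := by exact_mod_cast Int.one_le_abs h0
    have h2 : t ≤ |x| := by
      rw [h, abs_mul, abs_of_pos ht]
      nlinarith
    linarith

lemma aux_img_affine (t α lo hi : ℝ) (ht : 0 < t) :
    (fun x => α + t * x) '' Icc lo hi = Icc (α + t * lo) (α + t * hi) := by
  have h1 : (fun x => α + t * x) = (t * · + α) := by funext x; ring
  rw [h1, image_affine_Icc' ht, add_comm (t * lo) α, add_comm (t * hi) α]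

/-- For `a, b > 0`, `Δ = 2^{−b/a}`, `c = (log 2)/a`, a left translation
`L_g(x,y,z) = (α + e^{aγ}x, β + e^{−bγ}y, γ + z)` of `Sol(a,b)` by `g = (α,β,γ)`
maps every tile `Q(i,j,k)` onto a tile if and only if `α = 0`, `β = 0` and
`γ = mc` for some `m ∈ ℤ`; i.e., the left translations preserving the tiling
form exactly the infinite cyclic subgroup generated by `R̂`. -/
theorem tiling_symmetry_group (a b : ℝ) (ha : 0 < a) (hb : 0 < b)
    (Δ c : ℝ) (hΔ : Δ = (2 : ℝ) ^ (-b / a)) (hc : c = Real.log 2 / a)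
    (Q : ℤ → ℤ → ℤ → Set (ℝ × ℝ × ℝ))
    (hQ : ∀ i j k : ℤ,
      Q i j k = Icc ((2 : ℝ) ^ i * (j : ℝ)) ((2 : ℝ) ^ i * ((j : ℝ) + 1)) ×ˢ
        Icc (Δ ^ i * (k : ℝ)) (Δ ^ i * ((k : ℝ) + 1)) ×ˢ
        Icc ((i : ℝ) * c) (((i : ℝ) + 1) * c))
    (g : ℝ × ℝ × ℝ) (L : ℝ × ℝ × ℝ → ℝ × ℝ × ℝ)
    (hL : ∀ p : ℝ × ℝ × ℝ,
      L p = (g.1 + Real.exp (a * g.2.2) * p.1,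
             g.2.1 + Real.exp (-b * g.2.2) * p.2.1,
             g.2.2 + p.2.2)) :
    (∀ i j k : ℤ, ∃ i' j' k' : ℤ, L '' Q i j k = Q i' j' k') ↔
      (g.1 = 0 ∧ g.2.1 = 0 ∧ ∃ m : ℤ, g.2.2 = (m : ℝ) * c) := by
  obtain ⟨α, β, γ⟩ := g
  simp only at hL ⊢
  set E := Real.exp (a * γ) with hE
  set F := Real.exp (-b * γ) with hF
  have hE0 : 0 < E := Real.exp_pos _
  have hF0 : 0 < F := Real.exp_pos _
  have ha' : a ≠ 0 := ha.ne'
  have hlog2 : 0 < Real.log 2 := Real.log_pos one_lt_two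
  have hc0 : 0 < c := by rw [hc]; positivity
  have hΔ0 : 0 < Δ := by rw [hΔ]; positivity
  have hΔ1 : Δ < 1 := by
    rw [hΔ]
    exact Real.rpow_lt_one_of_one_lt_of_neg one_lt_two
      (div_neg_of_neg_of_pos (neg_lt_zero.2 hb) ha)
  have h2 : (0 : ℝ) < 2 := two_pos
  have hzpow2 : ∀ n : ℤ, (0 : ℝ) < (2 : ℝ) ^ n := fun n => zpow_pos h2 n
  have hzpowΔ : ∀ n : ℤ, (0 : ℝ) < Δ ^ n := fun n => zpow_pos hΔ0 n
  have hL' : L = fun p : ℝ × ℝ × ℝ =>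
      (α + E * p.1, β + F * p.2.1, γ + p.2.2) := by
    funext p; rw [hL p]
  have hLQ : ∀ i j k : ℤ, L '' Q i j k =
      Icc (α + E * ((2:ℝ) ^ i * (j:ℝ))) (α + E * ((2:ℝ) ^ i * ((j:ℝ) + 1))) ×ˢ
      Icc (β + F * (Δ ^ i * (k:ℝ))) (β + F * (Δ ^ i * ((k:ℝ) + 1))) ×ˢ
      Icc (γ + (i:ℝ) * c) (γ + ((i:ℝ) + 1) * c) := by
    intro i j k
    rw [hQ, hL',
      aux_image_prod3 (fun x => α + E * x) (fun y => β + F * y) (fun z => γ + z),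
      aux_img_affine _ _ _ _ hE0, aux_img_affine _ _ _ _ hF0,
      Set.image_const_add_Icc]
  have hxlt : ∀ (i j : ℤ), α + E * ((2:ℝ) ^ i * (j:ℝ)) < α + E * ((2:ℝ) ^ i * ((j:ℝ) + 1)) := by
    intro i j
    have := hzpow2 i
    nlinarith
  have hylt : ∀ (i k : ℤ), β + F * (Δ ^ i * (k:ℝ)) < β + F * (Δ ^ i * ((k:ℝ) + 1)) := by
    intro i k
    have := hzpowΔ i
    nlinarith
  have hzlt : ∀ i : ℤ, γ + (i:ℝ) * c < γ + ((i:ℝ) + 1) * c := by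
    intro i; nlinarith
  constructor
  · intro H
    obtain ⟨m0, j0, k0, h0⟩ := H 0 0 0
    rw [hLQ, hQ] at h0
    obtain ⟨_, _, hz0⟩ := aux_prod3_eq (nonempty_Icc.2 (hxlt 0 0).le)
      (nonempty_Icc.2 (hylt 0 0).le) (nonempty_Icc.2 (hzlt 0).le) h0
    have hγ : γ = (m0 : ℝ) * c := by
      have := (aux_Icc_endpoints (hzlt 0) hz0).1
      push_cast at this
      linarith
    have key : ∀ i : ℤ, ∃ j' k' : ℤ,
        α = (2:ℝ) ^ (m0 + i) * (j' : ℝ) ∧ β = Δ ^ (m0 + i) * (k' : ℝ) := by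
      intro i
      obtain ⟨i', j', k', hi⟩ := H i 0 0
      rw [hLQ, hQ] at hi
      obtain ⟨hx, hy, hz⟩ := aux_prod3_eq (nonempty_Icc.2 (hxlt i 0).le)
        (nonempty_Icc.2 (hylt i 0).le) (nonempty_Icc.2 (hzlt i).le) hi
      have hzi := (aux_Icc_endpoints (hzlt i) hz).1
      have hi' : i' = m0 + i := by
        have hh : ((m0:ℝ) + (i:ℝ)) * c = (i':ℝ) * c := by
          rw [hγ] at hzi; linarith
        have := mul_right_cancel₀ hc0.ne' hh
        exact_mod_cast this.symm
      have hxi := (aux_Icc_endpoints (hxlt i 0) hx).1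
      have hyi := (aux_Icc_endpoints (hylt i 0) hy).1
      simp only [Int.cast_zero, mul_zero, add_zero] at hxi hyi
      rw [hi'] at hxi hyi
      exact ⟨j', k', hxi, hyi⟩
    refine ⟨?_, ?_, m0, hγ⟩
    · obtain ⟨n, hn⟩ := pow_unbounded_of_one_lt |α| (one_lt_two (α := ℝ))
      obtain ⟨j', k', hα, -⟩ := key ((n : ℤ) - m0)
      have hpow : (2:ℝ) ^ (m0 + ((n:ℤ) - m0)) = (2:ℝ) ^ (n : ℕ) := by
        norm_num [zpow_natCast]
      rw [hpow] at hα
      exact aux_int_mul_eq_zero (by positivity) hn hα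
    · have hinv : 1 < Δ⁻¹ := (one_lt_inv₀ hΔ0).2 hΔ1
      obtain ⟨n, hn⟩ := pow_unbounded_of_one_lt |β| hinv
      obtain ⟨j', k', -, hβ⟩ := key (-(n:ℤ) - m0)
      have hpow : Δ ^ (m0 + (-(n:ℤ) - m0)) = (Δ⁻¹) ^ (n : ℕ) := by
        rw [inv_pow, ← zpow_natCast, ← zpow_neg]
        norm_num
      rw [hpow] at hβ
      exact aux_int_mul_eq_zero (by positivity) hn hβ
  · rintro ⟨hα, hβ, m, hγ⟩
    subst hα hβ
    intro i j k
    refine ⟨i + m, j, k, ?_⟩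
    rw [hLQ, hQ]
    have hEm : E = (2:ℝ) ^ m := by
      rw [hE, hγ, hc, ← Real.rpow_intCast 2 m, Real.rpow_def_of_pos h2]
      congr 1
      field_simp
    have hFm : F = Δ ^ m := by
      rw [hF, hγ, hc, hΔ, ← Real.rpow_intCast _ m, ← Real.rpow_mul h2.le,
        Real.rpow_def_of_pos h2]
      congr 1
      field_simp
    rw [hEm, hFm, hγ]
    have e2 : ∀ r : ℝ, (2:ℝ) ^ m * ((2:ℝ) ^ i * r) = (2:ℝ) ^ (i + m) * r := by
      intro r
      rw [zpow_add₀ (by norm_num : (2:ℝ) ≠ 0)]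
      ring
    have eΔ : ∀ r : ℝ, Δ ^ m * (Δ ^ i * r) = Δ ^ (i + m) * r := by
      intro r
      rw [zpow_add₀ (ne_of_gt hΔ0)]
      ring
    rw [e2, e2, eΔ, eΔ]
    push_cast
    ring_nf
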